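/- Let (G,w) be a weighted graph. The weight w extends to a pseudometric on V(G) (agreeing with w on edges) if and only if for every cycle C ⊆ G the inequality 2·max{w(e) : e ∈ E(C)} ≤ ∑_{e ∈ E(C)} w(e) holds. -/

import Mathlib

open scoped NNReal ENNReal
open SimpleGraph

namespace Stmt14Aux

variable {V : Type*} {G : SimpleGraph V} (w : Sym2 V → ℝ≥0)

/-- total weight of a walk -/
noncomputable def wsum {x y : V} (p : G.Walk x y) : ℝ≥0 := (p.edges.map w).sum

@[simp] lemma wsum_nil {x : V} : wsum w (SimpleGraph.Walk.nil : G.Walk x x) = 0 := rfl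

@[simp] lemma wsum_cons {x v y : V} (h : G.Adj x v) (p : G.Walk v y) :
    wsum w (SimpleGraph.Walk.cons h p) = w s(x, v) + wsum w p := by
  simp [wsum]

lemma wsum_append {x y z : V} (p : G.Walk x y) (q : G.Walk y z) :
    wsum w (p.append q) = wsum w p + wsum w q := by
  simp [wsum, SimpleGraph.Walk.edges_append]

lemma wsum_reverse {x y : V} (p : G.Walk x y) : wsum w p.reverse = wsum w p := by
  simp [wsum, SimpleGraph.Walk.edges_reverse, List.map_reverse,
    List.sum_reverse]

lemma wsum_dropUntil_le [DecidableEq V] {x y u : V} (p : G.Walk x y)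
    (h : u ∈ p.support) : wsum w (p.dropUntil u h) ≤ wsum w p := by
  conv_rhs => rw [← p.take_spec h]
  rw [wsum_append]
  exact le_add_self

lemma wsum_bypass_le [DecidableEq V] {x y : V} (p : G.Walk x y) :
    wsum w p.bypass ≤ wsum w p := by
  induction p with
  | nil => simp [SimpleGraph.Walk.bypass]
  | cons h p ih =>
    simp only [SimpleGraph.Walk.bypass]
    split_ifs with hs
    · exact le_trans (wsum_dropUntil_le w _ hs) (le_trans ih le_add_self)
    · rw [wsum_cons, wsum_cons]
      exact add_le_add_right ih _

/-- weighted (extended) distance -/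
noncomputable def eD (G : SimpleGraph V) (w : Sym2 V → ℝ≥0) (x y : V) : ℝ≥0∞ :=
  ⨅ p : G.Walk x y, (wsum w p : ℝ≥0∞)

lemma eD_le {x y : V} (p : G.Walk x y) : eD G w x y ≤ (wsum w p : ℝ≥0∞) :=
  iInf_le _ p

@[simp] lemma eD_self (x : V) : eD G w x x = 0 :=
  le_antisymm (by simpa using eD_le w (SimpleGraph.Walk.nil : G.Walk x x)) zero_le

lemma eD_comm (x y : V) : eD G w x y = eD G w y x := by
  have h : ∀ a b : V, eD G w a b ≤ eD G w b a := fun a b =>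
    le_iInf fun p => by
      simpa [wsum_reverse] using eD_le w p.reverse
  exact le_antisymm (h x y) (h y x)

lemma eD_triangle (x z y : V) : eD G w x y ≤ eD G w x z + eD G w z y := by
  have heq : eD G w x z + eD G w z y
      = ⨅ p : G.Walk x z, ⨅ q : G.Walk z y, ((wsum w p : ℝ≥0∞) + wsum w q) := by
    rw [eD, ENNReal.iInf_add]
    refine iInf_congr fun p => ?_
    rw [eD, ENNReal.add_iInf]
  rw [heq]
  refine le_iInf fun p => le_iInf fun q => ?_
  calc eD G w x y ≤ (wsum w (p.append q) : ℝ≥0∞) := eD_le w _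
    _ = (wsum w p : ℝ≥0∞) + wsum w q := by rw [wsum_append]; push_cast; ring

lemma eD_ne_top_of_reachable {x y : V} (h : G.Reachable x y) :
    eD G w x y ≠ ⊤ := by
  obtain ⟨p⟩ := h
  exact ne_top_of_le_ne_top ENNReal.coe_ne_top (eD_le w p)

lemma eD_le_w {u v : V} (h : G.Adj u v) : eD G w u v ≤ (w s(u, v) : ℝ≥0∞) := by
  simpa using eD_le w (h.toWalk)

/-- basepoint of the connected component of `x` -/
noncomputable def bp (G : SimpleGraph V) (x : V) : V := Quot.out (G.connectedComponentMk x)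

lemma reachable_bp (x : V) : G.Reachable x (bp G x) := by
  have : G.connectedComponentMk (bp G x) = G.connectedComponentMk x :=
    Quot.out_eq _
  exact (SimpleGraph.ConnectedComponent.exact this).symm

lemma bp_eq_of_reachable {x y : V} (h : G.Reachable x y) : bp G x = bp G y := by
  unfold bp
  rw [SimpleGraph.ConnectedComponent.sound h]

/-- distance of `x` to its component basepoint -/
noncomputable def f (G : SimpleGraph V) (w : Sym2 V → ℝ≥0) (x : V) : ℝ≥0 :=
  (eD G w x (bp G x)).toNNReal

/-- the pseudometric -/
noncomputable def d (G : SimpleGraph V) (w : Sym2 V → ℝ≥0) (x y : V) : ℝ≥0 :=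
  open scoped Classical in
  if G.Reachable x y then (eD G w x y).toNNReal else f G w x + f G w y

lemma coe_f (x : V) : (f G w x : ℝ≥0∞) = eD G w x (bp G x) :=
  ENNReal.coe_toNNReal (eD_ne_top_of_reachable w (reachable_bp x))

lemma f_le {x z : V} (h : G.Reachable x z) :
    f G w x ≤ (eD G w x z).toNNReal + f G w z := by
  rw [← ENNReal.coe_le_coe]
  push_cast
  rw [coe_f, coe_f, ENNReal.coe_toNNReal (eD_ne_top_of_reachable w h)]
  calc eD G w x (bp G x) = eD G w x (bp G z) := by rw [bp_eq_of_reachable h]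
    _ ≤ eD G w x z + eD G w z (bp G z) := eD_triangle w x z _

lemma d_le_ff {x y : V} (h : G.Reachable x y) :
    (eD G w x y).toNNReal ≤ f G w x + f G w y := by
  rw [← ENNReal.coe_le_coe]
  push_cast
  rw [coe_f, coe_f, ENNReal.coe_toNNReal (eD_ne_top_of_reachable w h)]
  calc eD G w x y ≤ eD G w x (bp G x) + eD G w (bp G x) y := eD_triangle w x _ y
    _ = eD G w x (bp G x) + eD G w y (bp G y) := by
        rw [eD_comm w (bp G x) y, bp_eq_of_reachable h]

lemma d_comm (x y : V) : d G w x y = d G w y x := by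
  classical
  unfold d
  by_cases h : G.Reachable x y
  · rw [if_pos h, if_pos h.symm, eD_comm]
  · rw [if_neg h, if_neg (fun hc => h hc.symm), add_comm]

lemma d_self (x : V) : d G w x x = 0 := by
  classical
  unfold d
  rw [if_pos (Reachable.refl x), eD_self]
  simp

lemma d_triangle (x y z : V) : d G w x y ≤ d G w x z + d G w z y := by
  classical
  unfold d
  by_cases hxz : G.Reachable x z <;> by_cases hzy : G.Reachable z y
  · have hxy : G.Reachable x y := hxz.trans hzy
    rw [if_pos hxy, if_pos hxz, if_pos hzy,
      ← ENNReal.toNNReal_add (eD_ne_top_of_reachable w hxz) (eD_ne_top_of_reachable w hzy)]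
    exact ENNReal.toNNReal_mono
      (by
        simp only [Ne, ENNReal.add_eq_top, not_or]
        exact ⟨eD_ne_top_of_reachable w hxz, eD_ne_top_of_reachable w hzy⟩)
      (eD_triangle w x z y)
  · have hxy : ¬ G.Reachable x y := fun hc => hzy (hxz.symm.trans hc)
    rw [if_neg hxy, if_pos hxz, if_neg hzy, ← add_assoc]
    exact add_le_add_left (f_le w hxz) _
  · have hxy : ¬ G.Reachable x y := fun hc => hxz (hc.trans hzy.symm)
    rw [if_neg hxy, if_neg hxz, if_pos hzy]
    have : f G w y ≤ (eD G w z y).toNNReal + f G w z := by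
      have := f_le w hzy.symm
      rwa [eD_comm] at this
    calc f G w x + f G w y ≤ f G w x + ((eD G w z y).toNNReal + f G w z) :=
          add_le_add_right this _
      _ = f G w x + f G w z + (eD G w z y).toNNReal := by ring
  · rw [if_neg hxz, if_neg hzy]
    have hfin : f G w x + f G w y ≤ f G w x + f G w z + (f G w z + f G w y) :=
      add_le_add le_self_add le_add_self
    by_cases hxy : G.Reachable x y
    · rw [if_pos hxy]
      exact le_trans (d_le_ff w hxy) hfin
    · rw [if_neg hxy]
      exact hfin

section Cycle

variable (hcyc : ∀ (u : V) (c : G.Walk u u), c.IsCycle →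
    ∀ e ∈ c.edges, 2 * w e ≤ (c.edges.map w).sum)

include hcyc

lemma w_le_wsum_path {u v : V} (h : G.Adj u v) (p : G.Walk v u) (hp : p.IsPath) :
    w s(u, v) ≤ wsum w p := by
  by_cases hmem : s(u, v) ∈ p.edges
  · exact List.single_le_sum (fun x _ => zero_le) _ (List.mem_map_of_mem (f := w) hmem)
  · have hc : (SimpleGraph.Walk.cons h p).IsCycle :=
      SimpleGraph.Path.cons_isCycle ⟨p, hp⟩ h hmem
    have := hcyc u (SimpleGraph.Walk.cons h p) hc s(u, v) (by simp)
    rw [SimpleGraph.Walk.edges_cons, List.map_cons, List.sum_cons, two_mul] at this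
    exact le_of_add_le_add_left this

lemma w_le_eD {u v : V} (h : G.Adj u v) : (w s(u, v) : ℝ≥0∞) ≤ eD G w u v := by
  classical
  refine le_iInf fun p => ?_
  rw [ENNReal.coe_le_coe]
  have h1 : w s(u, v) ≤ wsum w p.reverse.bypass :=
    w_le_wsum_path w hcyc h p.reverse.bypass p.reverse.bypass_isPath
  calc w s(u, v) ≤ wsum w p.reverse.bypass := h1
    _ ≤ wsum w p.reverse := wsum_bypass_le w _
    _ = wsum w p := wsum_reverse w p

lemma d_edge {u v : V} (h : G.Adj u v) : d G w u v = w s(u, v) := by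
  classical
  unfold d
  rw [if_pos h.reachable]
  have : eD G w u v = (w s(u, v) : ℝ≥0∞) :=
    le_antisymm (eD_le_w w h) (w_le_eD w hcyc h)
  rw [this, ENNReal.toNNReal_coe]

end Cycle

section Forward

variable (d : V → V → ℝ≥0) (hsymm : ∀ x y, d x y = d y x) (hrefl : ∀ x, d x x = 0)
  (htri : ∀ x y z, d x y ≤ d x z + d z y) (hedge : ∀ u v, G.Adj u v → d u v = w s(u, v))

include hsymm hrefl htri hedge

lemma d_le_wsum : ∀ {x y : V} (p : G.Walk x y), d x y ≤ wsum w p := by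
  intro x y p
  induction p with
  | nil => simp [hrefl]
  | @cons x v y h p ih =>
    rw [wsum_cons, ← hedge x v h]
    exact le_trans (htri x y v) (add_le_add_right ih _)

lemma key_ineq : ∀ {x y : V} (p : G.Walk x y) (a b : V), s(a, b) ∈ p.edges →
    d x a + w s(a, b) + d b y ≤ wsum w p ∨ d x b + w s(a, b) + d a y ≤ wsum w p := by
  intro x y p
  induction p with
  | nil => intro a b hab; simp at hab
  | @cons x v y h p ih =>
    intro a b hab
    rw [SimpleGraph.Walk.edges_cons, List.mem_cons] at hab
    rcases hab with hab | hab
    · rcases Sym2.eq_iff.mp hab with ⟨ha, hb⟩ | ⟨ha, hb⟩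
      · left
        rw [ha, hb, wsum_cons, hrefl, zero_add]
        exact add_le_add_right (d_le_wsum w d hsymm hrefl htri hedge p) _
      · right
        rw [ha, hb, wsum_cons, hrefl, zero_add,
          show s(v, x) = s(x, v) from Sym2.eq_swap]
        exact add_le_add_right (d_le_wsum w d hsymm hrefl htri hedge p) _
    · have hxa : ∀ c : V, d x c ≤ w s(x, v) + d v c := fun c => by
        rw [← hedge x v h]
        exact htri x c v
      rcases ih a b hab with hle | hle
      · left
        rw [wsum_cons]
        calc d x a + w s(a, b) + d b y ≤ (w s(x, v) + d v a) + w s(a, b) + d b y := by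
              exact add_le_add_left (add_le_add_left (hxa a) _) _
          _ = w s(x, v) + (d v a + w s(a, b) + d b y) := by ring
          _ ≤ w s(x, v) + wsum w p := add_le_add_right hle _
      · right
        rw [wsum_cons]
        calc d x b + w s(a, b) + d a y ≤ (w s(x, v) + d v b) + w s(a, b) + d a y := by
              exact add_le_add_left (add_le_add_left (hxa b) _) _
          _ = w s(x, v) + (d v b + w s(a, b) + d a y) := by ring
          _ ≤ w s(x, v) + wsum w p := add_le_add_right hle _

end Forward

end Stmt14Aux

/-- `w` extends to a pseudometric on `V(G)` iff for every cycle `C`,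
`2·max{w(e) : e ∈ E(C)} ≤ ∑_{e ∈ E(C)} w(e)` (equivalently, `2·w(e)` is at most the
total weight of `C` for every edge `e` of `C`). -/
theorem stmt_14 {V : Type*} (G : SimpleGraph V) (w : Sym2 V → ℝ≥0) :
    (∃ d : V → V → ℝ≥0,
        (∀ x y, d x y = d y x) ∧ (∀ x, d x x = 0) ∧
        (∀ x y z, d x y ≤ d x z + d z y) ∧
        ∀ u v, G.Adj u v → d u v = w s(u, v)) ↔
    (∀ (u : V) (c : G.Walk u u), c.IsCycle →
        ∀ e ∈ c.edges, 2 * w e ≤ (c.edges.map w).sum) := by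
  constructor
  · rintro ⟨d, hsymm, hrefl, htri, hedge⟩ u c _hc e he
    induction e with
    | h a b =>
      have hadj : G.Adj a b := c.adj_of_mem_edges he
      have hab : w s(a, b) = d a b := (hedge a b hadj).symm
      have hdab : d a b ≤ d a u + d u b := htri a b u
      have hkey := Stmt14Aux.key_ineq w d hsymm hrefl htri hedge c a b he
      have hsum : (c.edges.map w).sum = Stmt14Aux.wsum w c := rfl
      rw [hsum, two_mul]
      rcases hkey with hle | hle
      · calc w s(a, b) + w s(a, b) = w s(a, b) + d a b := by rw [hab]
          _ ≤ w s(a, b) + (d a u + d u b) := add_le_add_right hdab _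
          _ = d u a + w s(a, b) + d b u := by rw [hsymm a u, hsymm u b]; ring
          _ ≤ Stmt14Aux.wsum w c := hle
      · calc w s(a, b) + w s(a, b) = w s(a, b) + d a b := by rw [hab]
          _ ≤ w s(a, b) + (d a u + d u b) := add_le_add_right hdab _
          _ = d u b + w s(a, b) + d a u := by rw [hsymm u b]; ring
          _ ≤ Stmt14Aux.wsum w c := hle
  · intro hcyc
    refine ⟨Stmt14Aux.d G w, Stmt14Aux.d_comm w, Stmt14Aux.d_self w,
      Stmt14Aux.d_triangle w, fun u v h => Stmt14Aux.d_edge w hcyc h⟩
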